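/- Let α > 1, 0 < β < 1, and M > 1 be real numbers. Then the two-dimensional Lebesgue measure of the set { (x, y) ∈ (0,1) × (0,1) : β·x / (α·x + y)² > M } equals β² / (6·α³·M²). -/

import Mathlib

open Set MeasureTheory

/-- Proposition 2.8 (second part): the area of the `M`-sensitive region
`Ω_M(p(ω), p(ω_vu))` of the `K`-tuple Plackett–Luce model is `β²/(6α³M²)`. -/
theorem stmt_15 (α β M : ℝ) (hα : 1 < α) (hβ0 : 0 < β) (hβ1 : β < 1) (hM : 1 < M) :
    volume {p : ℝ × ℝ | p.1 ∈ Ioo (0 : ℝ) 1 ∧ p.2 ∈ Ioo (0 : ℝ) 1 ∧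
        β * p.1 / (α * p.1 + p.2) ^ 2 > M} =
      ENNReal.ofReal (β ^ 2 / (6 * α ^ 3 * M ^ 2)) := by
  have hα0 : (0:ℝ) < α := by linarith
  have hM0 : (0:ℝ) < M := by linarith
  set c : ℝ := β / (M * α ^ 2) with hc
  have hc0 : 0 < c := by positivity
  have hc1 : c < 1 := by
    rw [hc, div_lt_one (by positivity)]
    nlinarith
  set g : ℝ → ℝ := fun x => Real.sqrt (β / M) * Real.sqrt x - α * x with hg
  -- key: sqrt(β*x/M) = sqrt(β/M)*sqrt x for x ≥ 0
  have hsq : ∀ x : ℝ, 0 ≤ x → Real.sqrt (β * x / M) = Real.sqrt (β / M) * Real.sqrt x := by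
    intro x hx
    rw [show β * x / M = (β / M) * x by ring, Real.sqrt_mul (by positivity)]
  -- sqrt(β/M * c) = β/(M*α)
  have hsc : Real.sqrt (β / M) * Real.sqrt c = β / (M * α) := by
    rw [← Real.sqrt_mul (by positivity)]
    rw [show β / M * c = (β / (M * α)) ^ 2 by rw [hc]; field_simp]
    exact Real.sqrt_sq (by positivity)
  -- set equality
  have hset : {p : ℝ × ℝ | p.1 ∈ Ioo (0 : ℝ) 1 ∧ p.2 ∈ Ioo (0 : ℝ) 1 ∧
        β * p.1 / (α * p.1 + p.2) ^ 2 > M} = regionBetween (fun _ => (0:ℝ)) g (Ioo 0 c) := by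
    ext ⟨x, y⟩
    simp only [regionBetween, mem_setOf_eq, mem_Ioo]
    constructor
    · rintro ⟨⟨hx0, hx1⟩, ⟨hy0, hy1⟩, h⟩
      have hd0 : 0 < α * x + y := by positivity
      have hd2 : M * (α * x + y) ^ 2 < β * x := by
        rwa [gt_iff_lt, lt_div_iff₀ (by positivity)] at h
      have hdlt : (α * x + y) ^ 2 < β * x / M := by
        rw [lt_div_iff₀ hM0]; linarith [hd2]
      have hdsq : α * x + y < Real.sqrt (β * x / M) :=
        (Real.lt_sqrt hd0.le).2 hdlt
      have hylt : y < g x := by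
        rw [hg]; dsimp only
        rw [← hsq x hx0.le]; linarith
      have hxc : x < c := by
        have h1 : (α * x) ^ 2 < β * x / M := by
          nlinarith [hdlt, mul_pos (mul_pos hα0 hx0) hy0, sq_nonneg y]
        have h2 : (α * x) ^ 2 * M < β * x := by rwa [lt_div_iff₀ hM0] at h1
        rw [hc, lt_div_iff₀ (by positivity)]
        nlinarith [h2, hx0, mul_pos hx0 hx0]
      exact ⟨⟨hx0, hxc⟩, hy0, hylt⟩
    · rintro ⟨⟨hx0, hxc⟩, hy0, hyg⟩
      have hgx : y < Real.sqrt (β * x / M) - α * x := by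
        rw [hg] at hyg; dsimp only at hyg; rwa [hsq x hx0.le]
      have hx1 : x < 1 := lt_trans hxc hc1
      have hsm : Real.sqrt (β / M) * Real.sqrt x < β / (M * α) := by
        rw [← hsc]
        exact mul_lt_mul_of_pos_left
          (Real.sqrt_lt_sqrt hx0.le hxc) (Real.sqrt_pos.2 (by positivity))
      have hy1 : y < 1 := by
        have : y < Real.sqrt (β / M) * Real.sqrt x := by
          rw [hg] at hyg; dsimp only at hyg; nlinarith [hyg, mul_pos hα0 hx0]
        have hb1 : β / (M * α) < 1 := by
          rw [div_lt_one (by positivity)]; nlinarith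
        linarith
      have hd0 : 0 < α * x + y := by positivity
      have hdsq : α * x + y < Real.sqrt (β * x / M) := by linarith
      have hdlt : (α * x + y) ^ 2 < β * x / M := by
        rw [← Real.lt_sqrt hd0.le]; exact hdsq
      refine ⟨⟨hx0, hx1⟩, ⟨hy0, hy1⟩, ?_⟩
      rw [gt_iff_lt, lt_div_iff₀ (by positivity)]
      rw [lt_div_iff₀ hM0] at hdlt; linarith
  have hgcont : Continuous g := by
    rw [hg]
    exact ((continuous_const.mul Real.continuous_sqrt).sub
      (continuous_const.mul continuous_id))
  have hgint : IntegrableOn g (Ioo 0 c) :=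
    (hgcont.integrableOn_Icc (a := 0) (b := c)).mono_set Ioo_subset_Icc_self
  have h0int : IntegrableOn (fun _ : ℝ => (0:ℝ)) (Ioo 0 c) := integrableOn_zero
  have hle : ∀ x ∈ Ioo (0:ℝ) c, (fun _ => (0:ℝ)) x ≤ g x := by
    intro x hx
    dsimp only
    have h1 : α * x < Real.sqrt (β / M) * Real.sqrt x := by
      have hax : 0 < α * x := mul_pos hα0 hx.1
      have hxc := hx.2
      rw [hc, lt_div_iff₀ (by positivity)] at hxc
      have h2 : (α * x) ^ 2 < β / M * x := by
        rw [div_mul_eq_mul_div, lt_div_iff₀ hM0]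
        nlinarith [mul_lt_mul_of_pos_right hxc hx.1, hM0]
      calc α * x = Real.sqrt ((α * x) ^ 2) := (Real.sqrt_sq hax.le).symm
        _ < Real.sqrt (β / M * x) := Real.sqrt_lt_sqrt (sq_nonneg _) h2
        _ = Real.sqrt (β / M) * Real.sqrt x :=
            Real.sqrt_mul (show (0:ℝ) ≤ β / M by positivity) x
    rw [hg]; dsimp only; linarith
  rw [hset, Measure.volume_eq_prod,
    volume_regionBetween_eq_integral h0int hgint measurableSet_Ioo hle]
  congr 1
  have hgeq : (g - fun _ : ℝ => (0:ℝ)) = g := by funext t; simp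
  rw [hgeq, ← integral_Ioc_eq_integral_Ioo, ← intervalIntegral.integral_of_le hc0.le]
  have hsqrt_int : ∫ x in (0:ℝ)..c, Real.sqrt x = (c ^ ((3:ℝ)/2)) / (3/2) := by
    rw [intervalIntegral.integral_congr (g := fun x => x ^ ((1:ℝ)/2)) ?_]
    · rw [integral_rpow (Or.inl (by norm_num))]
      rw [Real.zero_rpow (by norm_num)]
      norm_num
    · intro x hx
      rw [uIcc_of_le hc0.le] at hx
      exact Real.sqrt_eq_rpow x
  have hc32 : c ^ ((3:ℝ)/2) = c * Real.sqrt c := by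
    rw [show (3:ℝ)/2 = 1 + 1/2 by norm_num, Real.rpow_add hc0, Real.rpow_one,
      Real.sqrt_eq_rpow]
  have : ∫ x in (0:ℝ)..c, g x
      = Real.sqrt (β / M) * (c ^ ((3:ℝ)/2) / (3/2)) - α * (c ^ 2 / 2) := by
    rw [hg]
    rw [intervalIntegral.integral_sub
      ((intervalIntegrable_const (c := Real.sqrt (β/M))).mul_continuousOn
        Real.continuous_sqrt.continuousOn) (by
          apply ContinuousOn.intervalIntegrable
          exact (continuous_const.mul continuous_id).continuousOn),
      intervalIntegral.integral_const_mul, intervalIntegral.integral_const_mul,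
      hsqrt_int, integral_id]
    ring
  rw [this, hc32]
  have key : Real.sqrt (β / M) * (c * Real.sqrt c) = c * (β / (M * α)) := by
    rw [← hsc]; ring
  rw [show Real.sqrt (β / M) * (c * Real.sqrt c / (3/2))
      = (Real.sqrt (β / M) * (c * Real.sqrt c)) / (3/2) by ring, key, hc]
  field_simp
  ring
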